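/- Let f ∈ C¹(ℝ²,ℝ) satisfy y·f(0,y) < 0 for all y ≠ 0 and ∂₂f(0,0) < 0 (so that f(0,0) = 0). Let x : ℝ → (-M,M) be differentiable, let η : ℝ → ℝ be continuous, and suppose x′(t) = f(x(t), x(η(t))) for all t ∈ ℝ. Define a(t) = ∫₀¹ ∂₁f(s·x(t), x(η(t))) ds and b(t) = ∫₀¹ ∂₂f(0, s·x(η(t))) ds. Then a and b are continuous, x′(t) = a(t)·x(t) + b(t)·x(η(t)) for all t ∈ ℝ, and there exist constants a₀ > 0 and 0 < b₀ ≤ b₁, depending only on f and M, such that |a(t)| ≤ a₀ and −b₁ ≤ b(t) ≤ −b₀ < 0 for all t ∈ ℝ. -/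

import Mathlib

open Set MeasureTheory Filter Topology

/-- Decomposition of the nonlinearity along a solution: with
`a(t) = ∫₀¹ ∂₁f(s·x(t), x(η(t))) ds` and `b(t) = ∫₀¹ ∂₂f(0, s·x(η(t))) ds`,
the functions `a`, `b` are continuous, `x′(t) = a(t)·x(t) + b(t)·x(η(t))`, and
there are constants `a₀ > 0` and `0 < b₀ ≤ b₁`, depending only on `f` and `M`,
such that `|a(t)| ≤ a₀` and `-b₁ ≤ b(t) ≤ -b₀ < 0` for all `t`. -/
theorem linear_decomposition_along_solution
    (M : ℝ) (hM : 0 < M)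
    (f : ℝ → ℝ → ℝ) (hf : ContDiff ℝ 1 (Function.uncurry f))
    (hf_neg : ∀ y : ℝ, y ≠ 0 → y * f 0 y < 0)
    (hf_d2 : deriv (fun y => f 0 y) 0 < 0)
    (x η : ℝ → ℝ)
    (hx_range : ∀ t, x t ∈ Ioo (-M) M)
    (hη_cont : Continuous η)
    (hx_ode : ∀ t, HasDerivAt x (f (x t) (x (η t))) t) :
    Continuous (fun t => ∫ s in (0:ℝ)..1, deriv (fun u => f u (x (η t))) (s * x t)) ∧
    Continuous (fun t => ∫ s in (0:ℝ)..1, deriv (fun v => f 0 v) (s * x (η t))) ∧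
    (∀ t, f (x t) (x (η t)) =
      (∫ s in (0:ℝ)..1, deriv (fun u => f u (x (η t))) (s * x t)) * x t +
      (∫ s in (0:ℝ)..1, deriv (fun v => f 0 v) (s * x (η t))) * x (η t)) ∧
    (∃ a₀ b₀ b₁ : ℝ, 0 < a₀ ∧ 0 < b₀ ∧ b₀ ≤ b₁ ∧
      ∀ z ζ : ℝ → ℝ, (∀ t, z t ∈ Ioo (-M) M) → Continuous ζ →
        (∀ t, HasDerivAt z (f (z t) (z (ζ t))) t) →
        ∀ t, |∫ s in (0:ℝ)..1, deriv (fun u => f u (z (ζ t))) (s * z t)| ≤ a₀ ∧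
          -b₁ ≤ (∫ s in (0:ℝ)..1, deriv (fun v => f 0 v) (s * z (ζ t))) ∧
          (∫ s in (0:ℝ)..1, deriv (fun v => f 0 v) (s * z (ζ t))) ≤ -b₀) := by
  have hdiff : Differentiable ℝ (Function.uncurry f) := hf.differentiable one_ne_zero
  set g₁ : ℝ × ℝ → ℝ := fun p => fderiv ℝ (Function.uncurry f) p (1, 0) with hg₁def
  set g₂ : ℝ × ℝ → ℝ := fun p => fderiv ℝ (Function.uncurry f) p (0, 1) with hg₂def
  have hg1c : Continuous g₁ := (hf.continuous_fderiv one_ne_zero).clm_apply continuous_const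
  have hg2c : Continuous g₂ := (hf.continuous_fderiv one_ne_zero).clm_apply continuous_const
  have hpd1 : ∀ u v : ℝ, HasDerivAt (fun u => f u v) (g₁ (u, v)) u := by
    intro u v
    have hD := (hdiff (u, v)).hasFDerivAt
    have h1 : HasDerivAt (fun u : ℝ => ((u, v) : ℝ × ℝ)) ((1 : ℝ), (0 : ℝ)) u :=
      HasDerivAt.prodMk (hasDerivAt_id u) (hasDerivAt_const u v)
    exact hD.comp_hasDerivAt u h1
  have hpd2 : ∀ u v : ℝ, HasDerivAt (fun v => f u v) (g₂ (u, v)) v := by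
    intro u v
    have hD := (hdiff (u, v)).hasFDerivAt
    have h1 : HasDerivAt (fun v : ℝ => ((u, v) : ℝ × ℝ)) ((0 : ℝ), (1 : ℝ)) v :=
      HasDerivAt.prodMk (hasDerivAt_const v u) (hasDerivAt_id v)
    exact hD.comp_hasDerivAt v h1
  have hd1 : ∀ u v : ℝ, deriv (fun u => f u v) u = g₁ (u, v) := fun u v => (hpd1 u v).deriv
  have hd2 : ∀ v : ℝ, deriv (fun v => f 0 v) v = g₂ (0, v) := fun v => (hpd2 0 v).deriv
  rw [hd2] at hf_d2
  simp only [hd1, hd2]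
  -- continuity of x
  have hx_cont : Continuous x :=
    continuous_iff_continuousAt.2 fun t => (hx_ode t).differentiableAt.continuousAt
  -- FTC lemmas
  have ftc1 : ∀ X Y : ℝ, f X Y - f 0 Y = (∫ s in (0:ℝ)..1, g₁ (s * X, Y)) * X := by
    intro X Y
    have hder : ∀ s ∈ uIcc (0:ℝ) 1, HasDerivAt (fun s => f (s * X) Y) (g₁ (s * X, Y) * X) s := by
      intro s _
      exact (hpd1 (s * X) Y).comp s (hasDerivAt_mul_const X)
    have hint : IntervalIntegrable (fun s => g₁ (s * X, Y) * X) volume 0 1 :=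
      ((hg1c.comp ((continuous_id.mul continuous_const).prodMk continuous_const)).mul
        continuous_const).intervalIntegrable 0 1
    have := intervalIntegral.integral_eq_sub_of_hasDerivAt hder hint
    rw [intervalIntegral.integral_mul_const] at this
    simpa using this.symm
  have ftc2 : ∀ Y : ℝ, f 0 Y - f 0 0 = (∫ s in (0:ℝ)..1, g₂ (0, s * Y)) * Y := by
    intro Y
    have hder : ∀ s ∈ uIcc (0:ℝ) 1, HasDerivAt (fun s => f 0 (s * Y)) (g₂ (0, s * Y) * Y) s := by
      intro s _
      exact (hpd2 0 (s * Y)).comp s (hasDerivAt_mul_const Y)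
    have hint : IntervalIntegrable (fun s => g₂ (0, s * Y) * Y) volume 0 1 :=
      ((hg2c.comp (continuous_const.prodMk (continuous_id.mul continuous_const))).mul
        continuous_const).intervalIntegrable 0 1
    have := intervalIntegral.integral_eq_sub_of_hasDerivAt hder hint
    rw [intervalIntegral.integral_mul_const] at this
    simpa using this.symm
  have f00 : f 0 0 = 0 := by
    have hc : Continuous (fun y => f 0 y) :=
      hf.continuous.comp (continuous_const.prodMk continuous_id)
    have h1 : f 0 0 ≤ 0 := by
      refine le_of_tendsto ((hc.tendsto 0).mono_left
        (nhdsWithin_le_nhds : 𝓝[Set.Ioi (0:ℝ)] 0 ≤ 𝓝 0)) ?_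
      filter_upwards [self_mem_nhdsWithin] with y (hy : y ∈ Ioi (0:ℝ))
      have hy' : (0:ℝ) < y := hy
      nlinarith [hf_neg y (ne_of_gt hy'), hy']
    have h2 : 0 ≤ f 0 0 := by
      refine ge_of_tendsto ((hc.tendsto 0).mono_left
        (nhdsWithin_le_nhds : 𝓝[Set.Iio (0:ℝ)] 0 ≤ 𝓝 0)) ?_
      filter_upwards [self_mem_nhdsWithin] with y (hy : y ∈ Iio (0:ℝ))
      have hy' : y < (0:ℝ) := hy
      nlinarith [hf_neg y (ne_of_lt hy'), hy']
    linarith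
  -- continuity of parametric integrals
  refine ⟨?_, ?_, ?_, ?_⟩
  · exact intervalIntegral.continuous_parametric_intervalIntegral_of_continuous'
      (f := fun t s => g₁ (s * x t, x (η t)))
      (hg1c.comp ((continuous_snd.mul (hx_cont.comp continuous_fst)).prodMk
        (hx_cont.comp (hη_cont.comp continuous_fst)))) 0 1
  · exact intervalIntegral.continuous_parametric_intervalIntegral_of_continuous'
      (f := fun t s => g₂ (0, s * x (η t)))
      (hg2c.comp (continuous_const.prodMk
        (continuous_snd.mul ((hx_cont.comp hη_cont).comp continuous_fst)))) 0 1
  · intro t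
    have h1 := ftc1 (x t) (x (η t))
    have h2 := ftc2 (x (η t))
    linarith
  · -- bounds
    obtain ⟨C, hC⟩ := (isCompact_Icc.prod isCompact_Icc :
        IsCompact (Icc (-M) M ×ˢ Icc (-M) M)).exists_bound_of_continuousOn hg1c.continuousOn
    set G : ℝ → ℝ := fun v => ∫ s in (0:ℝ)..1, g₂ (0, s * v) with hGdef
    have hGc : Continuous G :=
      intervalIntegral.continuous_parametric_intervalIntegral_of_continuous'
        (f := fun v s => g₂ (0, s * v))
        (hg2c.comp (continuous_const.prodMk (continuous_snd.mul continuous_fst))) 0 1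
    have hGneg : ∀ v ∈ Icc (-M) M, G v < 0 := by
      intro v _
      rcases eq_or_ne v 0 with rfl | hv
      · have : G 0 = g₂ (0, 0) := by
          simp [hGdef]
        rw [this]; exact hf_d2
      · have h2 := ftc2 v
        rw [f00, sub_zero] at h2
        change f 0 v = G v * v at h2
        have hneg := hf_neg v hv
        rw [h2] at hneg
        by_contra h
        push_neg at h
        nlinarith [mul_nonneg h (mul_self_nonneg v)]
    have hKne : (Icc (-M) M).Nonempty := ⟨0, mem_Icc.2 ⟨by linarith, by linarith⟩⟩
    obtain ⟨vmax, hvmaxm, hvmax⟩ :=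
      (isCompact_Icc : IsCompact (Icc (-M) M)).exists_isMaxOn hKne hGc.continuousOn
    obtain ⟨vmin, hvminm, hvmin⟩ :=
      (isCompact_Icc : IsCompact (Icc (-M) M)).exists_isMinOn hKne hGc.continuousOn
    refine ⟨max C 1, -(G vmax), -(G vmin), lt_of_lt_of_le one_pos (le_max_right C 1),
      by simpa using hGneg vmax hvmaxm, by simpa using hvmin hvmaxm, ?_⟩
    intro z ζ hz _ _ t
    have hzm : ∀ u, z u ∈ Icc (-M) M := fun u => Ioo_subset_Icc_self (hz u)
    refine ⟨?_, ?_, ?_⟩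
    · rw [← Real.norm_eq_abs]
      calc ‖∫ s in (0:ℝ)..1, g₁ (s * z t, z (ζ t))‖ ≤ C * |1 - 0| := by
            apply intervalIntegral.norm_integral_le_of_norm_le_const
            intro s hs
            rw [uIoc_of_le (by norm_num : (0:ℝ) ≤ 1)] at hs
            apply hC
            have h1 : -M ≤ z t := (hzm t).1
            have h2 : z t ≤ M := (hzm t).2
            have hs0 : 0 ≤ s := hs.1.le
            have hs1 : s ≤ 1 := hs.2
            refine ⟨mem_Icc.2 ⟨?_, ?_⟩, hzm (ζ t)⟩
            · show -M ≤ s * z t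
              nlinarith [mul_nonneg hs0 (by linarith : (0:ℝ) ≤ z t + M),
                mul_nonneg (by linarith : (0:ℝ) ≤ 1 - s) hM.le]
            · show s * z t ≤ M
              nlinarith [mul_nonneg hs0 (by linarith : (0:ℝ) ≤ M - z t),
                mul_nonneg (by linarith : (0:ℝ) ≤ 1 - s) hM.le]
        _ ≤ max C 1 := by rw [abs_of_nonneg (by norm_num : (0:ℝ) ≤ 1 - 0)]; simp [le_max_left]
    · simpa using hvmin (hzm (ζ t))
    · simpa using hvmax (hzm (ζ t))
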